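/- arXiv:math/9911224 — 2 statements merged into one kernel-verified Lean document; each statement's English description precedes it below -/
import Mathlib

section
/- The space exp₂(S¹) of nonempty subsets of the circle of cardinality at most 2 is homeomorphic to the Möbius band, i.e., to the quotient of [0,1] × [0,1] by the identification (0,t) ∼ (1, 1−t) for all t ∈ [0,1]. -/
open TopologicalSpace

noncomputable section

/-- `ExpLe n X` is the space of nonempty subsets of `X` having at most `n` elements,
topologized by the Hausdorff distance on nonempty compact subsets of `X`
(finite subsets are compact). -/
abbrev ExpLe (n : ℕ) (X : Type*) [MetricSpace X] :=
  {s : NonemptyCompacts X // (s : Set X).Finite ∧ (s : Set X).ncard ≤ n}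

/-- The relation identifying `(0, t)` with `(1, 1 - t)` on `[0,1] × [0,1]`. -/
def mobiusRel (p q : unitInterval × unitInterval) : Prop :=
  (p.1 : ℝ) = 0 ∧ (q.1 : ℝ) = 1 ∧ (p.2 : ℝ) = 1 - (q.2 : ℝ)

/-- The Möbius band: the quotient of `[0,1] × [0,1]` by the equivalence relation
generated by `(0, t) ∼ (1, 1 - t)`, with the quotient topology. -/
abbrev MobiusBand := Quot mobiusRel

namespace MobiusProof

open Set Metric Real

/-- The exponential with period 1. -/
def e (x : ℝ) : Circle := Circle.exp (2 * π * x)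

lemma e_eq_e {x y : ℝ} : e x = e y ↔ ∃ m : ℤ, x = y + m := by
  rw [e, e, Circle.exp_eq_exp]
  constructor
  · rintro ⟨m, h⟩
    refine ⟨m, ?_⟩
    have hπ : (2 : ℝ) * π ≠ 0 := by positivity
    have h2 : (2 * π) * x = (2 * π) * (y + m) := by linarith [h]
    exact mul_left_cancel₀ hπ h2
  · rintro ⟨m, h⟩
    exact ⟨m, by rw [h]; ring⟩

lemma continuous_e : Continuous e :=
  Circle.exp.continuous.comp (continuous_const.mul continuous_id)

lemma exists_rep (z : Circle) : ∃ a : ℝ, 0 ≤ a ∧ a < 1 ∧ e a = z := by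
  refine ⟨Int.fract (Complex.arg z / (2 * π)), Int.fract_nonneg _, Int.fract_lt_one _, ?_⟩
  have h1 : e (Complex.arg z / (2 * π)) = z := by
    rw [e]
    have hπ : (2 : ℝ) * π ≠ 0 := by positivity
    rw [mul_div_cancel₀ _ hπ]
    exact Circle.exp_arg z
  have h2 : e (Int.fract (Complex.arg z / (2 * π))) = e (Complex.arg z / (2 * π)) :=
    e_eq_e.2 ⟨-⌊Complex.arg z / (2 * π)⌋, by rw [Int.fract]; push_cast; ring⟩
  exact h2.trans h1

/-- unordered pair as a nonempty compact set -/
def pairNC (x y : Circle) : NonemptyCompacts Circle :=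
  ⟨⟨{x, y}, ((Set.finite_singleton y).insert x).isCompact⟩, ⟨x, Or.inl rfl⟩⟩

lemma lipschitz_pairNC : LipschitzWith 1 (fun p : Circle × Circle => pairNC p.1 p.2) := by
  apply LipschitzWith.of_edist_le
  rintro ⟨x, y⟩ ⟨x', y'⟩
  show EMetric.hausdorffEdist ({x, y} : Set Circle) {x', y'} ≤ _
  apply EMetric.hausdorffEdist_le_of_mem_edist
  · rintro z (rfl | rfl)
    · exact ⟨x', Or.inl rfl, le_max_left _ _⟩
    · exact ⟨y', Or.inr rfl, le_max_right _ _⟩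
  · rintro z (rfl | rfl)
    · exact ⟨x, Or.inl rfl, by rw [edist_comm]; exact le_max_left _ _⟩
    · exact ⟨y, Or.inr rfl, by rw [edist_comm]; exact le_max_right _ _⟩

/-- the map from the square -/
def F (p : unitInterval × unitInterval) : ExpLe 2 Circle :=
  ⟨pairNC (e (((p.1 : ℝ) + (p.2 : ℝ)) / 2)) (e (((p.1 : ℝ) - (p.2 : ℝ)) / 2)), by
    constructor
    · exact (Set.finite_singleton _).insert _
    · exact (Set.ncard_insert_le _ _).trans (by simp)⟩

lemma continuous_F : Continuous F := by
  apply Continuous.subtype_mk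
  have h1 : Continuous fun p : unitInterval × unitInterval => (((p.1 : ℝ) + (p.2 : ℝ)) / 2) := by
    fun_prop
  have h2 : Continuous fun p : unitInterval × unitInterval => (((p.1 : ℝ) - (p.2 : ℝ)) / 2) := by
    fun_prop
  exact lipschitz_pairNC.continuous.comp
    ((continuous_e.comp h1).prodMk (continuous_e.comp h2))

lemma F_coe (p : unitInterval × unitInterval) :
    ((F p : NonemptyCompacts Circle) : Set Circle) =
      {e (((p.1 : ℝ) + (p.2 : ℝ)) / 2), e (((p.1 : ℝ) - (p.2 : ℝ)) / 2)} := rfl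

lemma F_eq_iff (p q : unitInterval × unitInterval) :
    F p = F q ↔ ({e (((p.1 : ℝ) + (p.2 : ℝ)) / 2), e (((p.1 : ℝ) - (p.2 : ℝ)) / 2)} : Set Circle)
      = {e (((q.1 : ℝ) + (q.2 : ℝ)) / 2), e (((q.1 : ℝ) - (q.2 : ℝ)) / 2)} := by
  constructor
  · intro h
    rw [← F_coe, ← F_coe, h]
  · intro h
    exact Subtype.ext (NonemptyCompacts.ext h)

lemma F_resp : ∀ p q, mobiusRel p q → F p = F q := by
  rintro ⟨s₁, t₁⟩ ⟨s₂, t₂⟩ ⟨h1, h2, h3⟩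
  rw [F_eq_iff]
  simp only at h1 h2 h3 ⊢
  rw [h1, h2, h3]
  have ha : e ((0 + (1 - (t₂ : ℝ))) / 2) = e (((1 : ℝ) - (t₂ : ℝ)) / 2) := by norm_num
  have hb : e ((0 - (1 - (t₂ : ℝ))) / 2) = e (((1 : ℝ) + (t₂ : ℝ)) / 2) := by
    rw [e_eq_e]; exact ⟨-1, by push_cast; ring⟩
  rw [ha, hb, Set.pair_comm]

lemma F_surj : Function.Surjective F := by
  have key : ∀ α β : ℝ, 0 ≤ β → β ≤ α → α < 1 →
      ∃ p : unitInterval × unitInterval,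
        (({e (((p.1 : ℝ) + (p.2 : ℝ)) / 2), e (((p.1 : ℝ) - (p.2 : ℝ)) / 2)} : Set Circle)
          = {e α, e β}) := by
    intro α β hβ hβα hα
    by_cases h : α + β ≤ 1
    · refine ⟨(⟨α + β, by constructor <;> linarith⟩, ⟨α - β, by constructor <;> linarith⟩), ?_⟩
      simp only
      rw [show (α + β + (α - β)) / 2 = α by ring, show (α + β - (α - β)) / 2 = β by ring]
    · refine ⟨(⟨α + β - 1, by constructor <;> linarith⟩,
        ⟨β - α + 1, by constructor <;> linarith⟩), ?_⟩
      simp only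
      have h1 : e ((α + β - 1 + (β - α + 1)) / 2) = e β := by
        rw [show (α + β - 1 + (β - α + 1)) / 2 = β by ring]
      have h2 : e ((α + β - 1 - (β - α + 1)) / 2) = e α := by
        rw [e_eq_e]; exact ⟨-1, by push_cast; ring⟩
      rw [h1, h2, Set.pair_comm]
  rintro ⟨K, hfin, hcard⟩
  have hne : (K : Set Circle).Nonempty := K.nonempty
  have hex : ∃ x y : Circle, (K : Set Circle) = {x, y} := by
    have h1 : 1 ≤ (K : Set Circle).ncard := by
      rcases hne with ⟨x, hx⟩
      exact (Set.ncard_pos hfin).2 ⟨x, hx⟩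
    have h12 : (K : Set Circle).ncard = 1 ∨ (K : Set Circle).ncard = 2 := by omega
    rcases h12 with h | h
    · rcases Set.ncard_eq_one.1 h with ⟨a, ha⟩
      exact ⟨a, a, by rw [ha]; simp⟩
    · rcases Set.ncard_eq_two.1 h with ⟨a, b, _, hab⟩
      exact ⟨a, b, hab⟩
  obtain ⟨x, y, hxy⟩ := hex
  obtain ⟨α, hα0, hα1, hαe⟩ := exists_rep x
  obtain ⟨β, hβ0, hβ1, hβe⟩ := exists_rep y
  rcases le_total β α with hle | hle
  · obtain ⟨p, hp⟩ := key α β hβ0 hle hα1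
    refine ⟨p, ?_⟩
    apply Subtype.ext; apply NonemptyCompacts.ext
    rw [F_coe, hp, hαe, hβe, hxy]
  · obtain ⟨p, hp⟩ := key β α hα0 hle hβ1
    refine ⟨p, ?_⟩
    apply Subtype.ext; apply NonemptyCompacts.ext
    rw [F_coe, hp, hαe, hβe, hxy, Set.pair_comm]

lemma F_inj : ∀ p q, F p = F q → Quot.mk mobiusRel p = Quot.mk mobiusRel q := by
  rintro ⟨⟨s₁, hs₁0, hs₁1⟩, ⟨t₁, ht₁0, ht₁1⟩⟩ ⟨⟨s₂, hs₂0, hs₂1⟩, ⟨t₂, ht₂0, ht₂1⟩⟩ h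
  rw [F_eq_iff] at h
  rw [Set.pair_eq_pair_iff] at h
  simp only at h
  have mkeq : s₁ = s₂ → t₁ = t₂ →
      Quot.mk mobiusRel (⟨s₁, hs₁0, hs₁1⟩, (⟨t₁, ht₁0, ht₁1⟩ : unitInterval))
        = Quot.mk mobiusRel (⟨s₂, hs₂0, hs₂1⟩, (⟨t₂, ht₂0, ht₂1⟩ : unitInterval)) := by
    intro h1 h2
    congr 1
    exact Prod.ext (Subtype.ext h1) (Subtype.ext h2)
  rcases h with ⟨h1, h2⟩ | ⟨h1, h2⟩
  · -- straight case
    obtain ⟨m, hm⟩ := e_eq_e.1 h1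
    obtain ⟨n, hn⟩ := e_eq_e.1 h2
    have hmb : (-1 : ℤ) ≤ m ∧ m ≤ 1 := by
      have : (-1 : ℝ) ≤ (m : ℝ) ∧ (m : ℝ) ≤ 1 := ⟨by linarith, by linarith⟩
      exact_mod_cast this
    have hnb : (-1 : ℤ) ≤ n ∧ n ≤ 1 := by
      have : (-1 : ℝ) ≤ (n : ℝ) ∧ (n : ℝ) ≤ 1 := ⟨by linarith, by linarith⟩
      exact_mod_cast this
    obtain ⟨hm1, hm2⟩ := hmb
    obtain ⟨hn1, hn2⟩ := hnb
    interval_cases m <;> interval_cases n <;> push_cast at hm hn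
    -- (-1,-1)
    · exfalso; linarith
    -- (-1,0) : p = (0,0), q = (1,1), mobiusRel p q
    · exact Quot.sound ⟨show s₁ = 0 by linarith, show s₂ = 1 by linarith,
        show t₁ = 1 - t₂ by linarith⟩
    -- (-1,1)
    · exfalso; linarith
    -- (0,-1) : p = (0,1), q = (1,0), mobiusRel p q
    · exact Quot.sound ⟨show s₁ = 0 by linarith, show s₂ = 1 by linarith,
        show t₁ = 1 - t₂ by linarith⟩
    -- (0,0)
    · exact mkeq (by linarith) (by linarith)
    -- (0,1) : mobiusRel q p
    · exact (Quot.sound ⟨show s₂ = 0 by linarith, show s₁ = 1 by linarith,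
        show t₂ = 1 - t₁ by linarith⟩).symm
    -- (1,-1)
    · exfalso; linarith
    -- (1,0) : mobiusRel q p
    · exact (Quot.sound ⟨show s₂ = 0 by linarith, show s₁ = 1 by linarith,
        show t₂ = 1 - t₁ by linarith⟩).symm
    -- (1,1)
    · exfalso; linarith
  · -- cross case
    obtain ⟨m, hm⟩ := e_eq_e.1 h1
    obtain ⟨n, hn⟩ := e_eq_e.1 h2
    have hmb : (0 : ℤ) ≤ m ∧ m ≤ 1 := by
      have hr : (-1 : ℝ) < (m : ℝ) ∧ (m : ℝ) < 2 := ⟨by linarith, by linarith⟩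
      have : (-1 : ℤ) < m ∧ m < 2 := by exact_mod_cast hr
      omega
    have hnb : (-1 : ℤ) ≤ n ∧ n ≤ 0 := by
      have hr : (-2 : ℝ) < (n : ℝ) ∧ (n : ℝ) < 1 := ⟨by linarith, by linarith⟩
      have : (-2 : ℤ) < n ∧ n < 1 := by exact_mod_cast hr
      omega
    obtain ⟨hm1, hm2⟩ := hmb
    obtain ⟨hn1, hn2⟩ := hnb
    interval_cases m <;> interval_cases n <;> push_cast at hm hn
    -- (0,-1) : mobiusRel p q
    · exact Quot.sound ⟨show s₁ = 0 by linarith, show s₂ = 1 by linarith,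
        show t₁ = 1 - t₂ by linarith⟩
    -- (0,0)
    · exact mkeq (by linarith) (by linarith)
    -- (1,-1)
    · exact mkeq (by linarith) (by linarith)
    -- (1,0) : mobiusRel q p
    · exact (Quot.sound ⟨show s₂ = 0 by linarith, show s₁ = 1 by linarith,
        show t₂ = 1 - t₁ by linarith⟩).symm

end MobiusProof

/-- `exp₂ S¹` is homeomorphic to the Möbius band. -/
theorem exp2_circle_homeo_mobiusBand : Nonempty (ExpLe 2 Circle ≃ₜ MobiusBand) := by
  have hGb : Function.Bijective (Quot.lift MobiusProof.F MobiusProof.F_resp) := by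
    constructor
    · intro a b hab
      induction a using Quot.ind with | _ p =>
      induction b using Quot.ind with | _ q =>
      exact MobiusProof.F_inj p q hab
    · intro s
      obtain ⟨p, hp⟩ := MobiusProof.F_surj s
      exact ⟨Quot.mk _ p, hp⟩
  let E : MobiusBand ≃ ExpLe 2 Circle := Equiv.ofBijective _ hGb
  have hGc : Continuous E := continuous_quot_lift _ MobiusProof.continuous_F
  exact ⟨(hGc.homeoOfEquivCompactToT2).symm⟩
end
end

section
/- Every lattice L in ℝ² admits a ℤ-basis (v, w) such that all three angles of the triangle with vertices 0, v, w are at most π/2; equivalently, there exist v, w ∈ L with L = ℤv + ℤw, v and w linearly independent, and ⟨v, w⟩ ≥ 0, ⟨v, v − w⟩ ≥ 0, ⟨w, w − v⟩ ≥ 0 (where ⟨·,·⟩ is the standard inner product on ℝ²). -/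
open scoped RealInnerProductSpace

set_option maxHeartbeats 1000000

noncomputable section

/-- The Euclidean plane `ℝ²` with its standard inner product. -/
abbrev E2 := EuclideanSpace ℝ (Fin 2)

/-- `(v, w)` is a ℤ-basis of the subgroup `L` of `ℝ²`: `v, w` are linearly
independent and `L = ℤv + ℤw`. -/
def IsZBasis (L : AddSubgroup E2) (v w : E2) : Prop :=
  LinearIndependent ℝ ![v, w] ∧ L = AddSubgroup.closure {v, w}

/-- `L` is a lattice in `ℝ²`: a subgroup generated by two linearly independent
vectors. -/
def IsLattice2 (L : AddSubgroup E2) : Prop :=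
  ∃ v w, IsZBasis L v w

/-- A linearly independent pair in `ℝ²` forms a basis. -/
lemma exists_basis_pair (v w : E2) (h : LinearIndependent ℝ ![v, w]) :
    ∃ b : Module.Basis (Fin 2) ℝ E2, b 0 = v ∧ b 1 = w := by
  have hcard : Fintype.card (Fin 2) = Module.finrank ℝ E2 := by
    simp [finrank_euclideanSpace]
  refine ⟨basisOfLinearIndependentOfCardEqFinrank h hcard, ?_, ?_⟩ <;>
    rw [coe_basisOfLinearIndependentOfCardEqFinrank] <;> rfl

/-- Bounded subsets of a lattice are finite. -/
lemma lattice_finite_ball (L : AddSubgroup E2) (v₀ w₀ : E2) (h : IsZBasis L v₀ w₀) (r : ℝ) :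
    {u : E2 | u ∈ L ∧ ‖u‖ ≤ r}.Finite := by
  obtain ⟨hli, hgen⟩ := h
  obtain ⟨b, hb0, hb1⟩ := exists_basis_pair v₀ w₀ hli
  set c0 : E2 →L[ℝ] ℝ := LinearMap.toContinuousLinearMap (b.coord 0) with hc0
  set c1 : E2 →L[ℝ] ℝ := LinearMap.toContinuousLinearMap (b.coord 1) with hc1
  set C : ℝ := max ‖c0‖ ‖c1‖ with hC
  set M : ℤ := ⌈C * r⌉ with hM
  have hrepr : ∀ m n : ℤ, m • v₀ + n • w₀ = (m : ℝ) • b 0 + (n : ℝ) • b 1 := by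
    intro m n
    rw [hb0, hb1, Int.cast_smul_eq_zsmul, Int.cast_smul_eq_zsmul]
  have key0 : ∀ m n : ℤ, c0 (m • v₀ + n • w₀) = m := by
    intro m n
    rw [hc0, LinearMap.coe_toContinuousLinearMap', hrepr]
    simp [Module.Basis.coord_apply, Module.Basis.repr_self_apply]
  have key1 : ∀ m n : ℤ, c1 (m • v₀ + n • w₀) = n := by
    intro m n
    rw [hc1, LinearMap.coe_toContinuousLinearMap', hrepr]
    simp [Module.Basis.coord_apply, Module.Basis.repr_self_apply]
  apply Set.Finite.subset
    (Set.Finite.image (fun p : ℤ × ℤ => p.1 • v₀ + p.2 • w₀)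
      ((Set.finite_Icc (-M) M).prod (Set.finite_Icc (-M) M)))
  rintro u ⟨huL, hur⟩
  rw [hgen, AddSubgroup.mem_closure_pair] at huL
  obtain ⟨m, n, rfl⟩ := huL
  have hbound : ∀ (c : E2 →L[ℝ] ℝ) (k : ℤ), ‖c‖ ≤ C → c (m • v₀ + n • w₀) = k →
      k ∈ Set.Icc (-M) M := by
    intro c k hcC hk
    have h1 : |(k : ℝ)| ≤ ‖c‖ * ‖m • v₀ + n • w₀‖ := by
      rw [← hk, ← Real.norm_eq_abs]
      exact c.le_opNorm _
    have h2 : ‖c‖ * ‖m • v₀ + n • w₀‖ ≤ C * r :=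
      mul_le_mul hcC hur (norm_nonneg _) (le_trans (norm_nonneg c) hcC)
    have h3 : (|k| : ℝ) ≤ (M : ℝ) :=
      le_trans (le_trans h1 h2) (Int.le_ceil _)
    have h4 : |k| ≤ M := by exact_mod_cast h3
    exact ⟨(abs_le.mp h4).1, (abs_le.mp h4).2⟩
  exact ⟨(m, n), ⟨hbound c0 m (le_max_left _ _) (key0 m n),
    hbound c1 n (le_max_right _ _) (key1 m n)⟩, rfl⟩

/-- Existence of a norm-minimizer in a nonempty subset of a lattice. -/
lemma lattice_exists_min (L : AddSubgroup E2) (v₀ w₀ : E2) (h : IsZBasis L v₀ w₀)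
    (S : Set E2) (hS : ∀ u ∈ S, u ∈ L) (hne : S.Nonempty) :
    ∃ s ∈ S, ∀ t ∈ S, ‖s‖ ≤ ‖t‖ := by
  obtain ⟨s₀, hs₀⟩ := hne
  have hT : {u | u ∈ S ∧ ‖u‖ ≤ ‖s₀‖}.Finite :=
    (lattice_finite_ball L v₀ w₀ h ‖s₀‖).subset (fun u hu => ⟨hS u hu.1, hu.2⟩)
  obtain ⟨s, hs, hmin⟩ := Set.exists_min_image _ (fun u => ‖u‖) hT ⟨s₀, hs₀, le_refl _⟩
  refine ⟨s, hs.1, fun t ht => ?_⟩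
  by_cases h' : ‖t‖ ≤ ‖s₀‖
  · exact hmin t ⟨ht, h'⟩
  · exact le_trans (hmin s₀ ⟨hs₀, le_refl _⟩) (le_of_not_ge h')

lemma main_aux (L : AddSubgroup E2) (v w : E2) (hvL : v ∈ L) (hwL : w ∈ L)
    (hv0 : v ≠ 0) (hw_ns : w ∉ Submodule.span ℝ {v})
    (hvmin : ∀ u ∈ L, u ≠ 0 → ‖v‖ ≤ ‖u‖)
    (hwmin : ∀ u ∈ L, u ∉ Submodule.span ℝ {v} → ‖w‖ ≤ ‖u‖)
    (hip : 0 ≤ ⟪v, w⟫) :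
    ∃ v w, IsZBasis L v w ∧ 0 ≤ ⟪v, w⟫ ∧ 0 ≤ ⟪v, v - w⟫ ∧ 0 ≤ ⟪w, w - v⟫ := by
  have hw0 : w ≠ 0 := fun h => hw_ns (h ▸ Submodule.zero_mem _)
  have hvw_norm : ‖v‖ ≤ ‖w‖ := hvmin w hwL hw0
  have hw2 : ‖v‖ ^ 2 ≤ ‖w‖ ^ 2 := by
    have := pow_le_pow_left₀ (norm_nonneg v) hvw_norm 2
    simpa using this
  -- 2⟪v,w⟫ ≤ ‖v‖²
  have hwv_ns : w - v ∉ Submodule.span ℝ {v} := by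
    intro hmem
    apply hw_ns
    have := Submodule.add_mem _ hmem (Submodule.mem_span_singleton_self v)
    simpa using this
  have hwv : ‖w‖ ≤ ‖w - v‖ := hwmin _ (AddSubgroup.sub_mem L hwL hvL) hwv_ns
  have h2vw : 2 * ⟪v, w⟫ ≤ ‖v‖ ^ 2 := by
    have hsq : ‖w - v‖ ^ 2 = ‖w‖ ^ 2 - 2 * ⟪w, v⟫ + ‖v‖ ^ 2 := norm_sub_sq_real w v
    have h1 : ‖w‖ ^ 2 ≤ ‖w - v‖ ^ 2 := by
      have := pow_le_pow_left₀ (norm_nonneg w) hwv 2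
      simpa using this
    nlinarith [real_inner_comm v w]
  -- linear independence of (v, w)
  have hli : LinearIndependent ℝ ![v, w] := by
    rw [LinearIndependent.pair_iff]
    intro s t hst
    by_cases ht : t = 0
    · subst ht
      simp only [zero_smul, add_zero] at hst
      rcases smul_eq_zero.mp hst with h | h
      · exact ⟨h, rfl⟩
      · exact absurd h hv0
    · exfalso
      apply hw_ns
      rw [Submodule.mem_span_singleton]
      refine ⟨-s / t, ?_⟩
      have h' : t • w = -(s • v) := by
        rw [eq_neg_iff_add_eq_zero, add_comm]
        exact hst
      calc (-s / t) • v = t⁻¹ • ((-s) • v) := by rw [smul_smul]; ring_nf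
        _ = t⁻¹ • (t • w) := by rw [neg_smul, ← h']
        _ = w := by rw [smul_smul, inv_mul_cancel₀ ht, one_smul]
  -- basis of ℝ² from (v, w)
  obtain ⟨b, hb0, hb1⟩ := exists_basis_pair v w hli
  -- generation
  have hgen : L = AddSubgroup.closure {v, w} := by
    apply le_antisymm
    · intro u huL
      rw [AddSubgroup.mem_closure_pair]
      set a0 : ℝ := b.repr u 0 with ha0def
      set a1 : ℝ := b.repr u 1 with ha1def
      have hu : u = a0 • v + a1 • w := by
        have hsum := b.sum_repr u
        rw [Fin.sum_univ_two, hb0, hb1] at hsum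
        exact hsum.symm
      set m : ℤ := round a0 with hmdef
      set n : ℤ := round a1 with hndef
      set α : ℝ := a0 - m with hαdef
      set β : ℝ := a1 - n with hβdef
      have hα : |α| ≤ 1 / 2 := abs_sub_round a0
      have hβ : |β| ≤ 1 / 2 := abs_sub_round a1
      set u' : E2 := α • v + β • w with hu'def
      have hu'eq : u' = u - (m • v + n • w) := by
        rw [hu'def, hαdef, hβdef, ← Int.cast_smul_eq_zsmul ℝ m v,
          ← Int.cast_smul_eq_zsmul ℝ n w, hu]
        module
      have hu'L : u' ∈ L := by
        rw [hu'eq]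
        exact L.sub_mem huL (L.add_mem (AddSubgroup.zsmul_mem L hvL m)
          (AddSubgroup.zsmul_mem L hwL n))
      have hβ0 : β = 0 := by
        by_contra hβne
        have hns : u' ∉ Submodule.span ℝ {v} := by
          rw [Submodule.mem_span_singleton]
          rintro ⟨t, ht⟩
          rw [hu'def] at ht
          have hz : (α - t) • v + β • w = 0 := by
            rw [sub_smul, ht]
            abel
          obtain ⟨-, hβ'⟩ := (LinearIndependent.pair_iff.mp hli) (α - t) β hz
          exact hβne hβ'
        have hwu' : ‖w‖ ≤ ‖u'‖ := hwmin u' hu'L hns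
        have hexp : ‖u'‖ ^ 2 = α ^ 2 * ‖v‖ ^ 2 + 2 * (α * β * ⟪v, w⟫) + β ^ 2 * ‖w‖ ^ 2 := by
          rw [hu'def, norm_add_sq_real, norm_smul, norm_smul, real_inner_smul_left,
            real_inner_smul_right]
          simp only [Real.norm_eq_abs, mul_pow, sq_abs]
          ring
        have hα2 : α ^ 2 ≤ 1 / 4 := by nlinarith [(abs_le.mp hα).1, (abs_le.mp hα).2]
        have hβ2 : β ^ 2 ≤ 1 / 4 := by nlinarith [(abs_le.mp hβ).1, (abs_le.mp hβ).2]
        have hαβ : α * β ≤ 1 / 4 := by nlinarith [sq_nonneg (α - β)]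
        have hwpos : 0 < ‖w‖ := norm_pos_iff.mpr hw0
        have hsq : ‖w‖ ^ 2 ≤ ‖u'‖ ^ 2 := by
          have := pow_le_pow_left₀ (norm_nonneg w) hwu' 2
          simpa using this
        have e1 : α ^ 2 * ‖v‖ ^ 2 ≤ 1 / 4 * ‖v‖ ^ 2 :=
          mul_le_mul_of_nonneg_right hα2 (sq_nonneg ‖v‖)
        have e2 : β ^ 2 * ‖w‖ ^ 2 ≤ 1 / 4 * ‖w‖ ^ 2 :=
          mul_le_mul_of_nonneg_right hβ2 (sq_nonneg ‖w‖)
        have e3 : α * β * ⟪v, w⟫ ≤ 1 / 4 * ⟪v, w⟫ :=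
          mul_le_mul_of_nonneg_right hαβ hip
        have hWpos : (0 : ℝ) < ‖w‖ ^ 2 := pow_pos hwpos 2
        clear_value u' β α n m a1 a0
        linarith
      have hα0 : α = 0 := by
        by_contra hαne
        have hu'eq2 : u' = α • v := by rw [hu'def, hβ0]; simp
        have hu'ne : u' ≠ 0 := by
          rw [hu'eq2]
          exact smul_ne_zero hαne hv0
        have hle : ‖v‖ ≤ ‖u'‖ := hvmin u' hu'L hu'ne
        have hnorm : ‖u'‖ = |α| * ‖v‖ := by
          rw [hu'eq2, norm_smul, Real.norm_eq_abs]
        have hvpos : 0 < ‖v‖ := norm_pos_iff.mpr hv0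
        nlinarith [abs_nonneg α]
      have ha0 : a0 = (m : ℝ) := by
        have := sub_eq_zero.mp hα0
        exact this
      have ha1 : a1 = (n : ℝ) := sub_eq_zero.mp hβ0
      refine ⟨m, n, ?_⟩
      rw [← Int.cast_smul_eq_zsmul ℝ m v, ← Int.cast_smul_eq_zsmul ℝ n w, ← ha0, ← ha1]
      exact hu.symm
    · rw [AddSubgroup.closure_le]
      rintro x hx
      rcases hx with rfl | rfl
      · exact hvL
      · exact hwL
  refine ⟨v, w, ⟨hli, hgen⟩, hip, ?_, ?_⟩
  · rw [inner_sub_right, real_inner_self_eq_norm_sq]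
    linarith [sq_nonneg ‖v‖]
  · rw [inner_sub_right, real_inner_self_eq_norm_sq]
    have hcomm : ⟪w, v⟫ = ⟪v, w⟫ := real_inner_comm v w
    linarith [sq_nonneg ‖v‖, hw2]

/-- Every lattice `L` in `ℝ²` admits a ℤ-basis `(v, w)` such that all three angles
of the triangle with vertices `0, v, w` are at most `π/2`, i.e.
`⟨v, w⟩ ≥ 0`, `⟨v, v − w⟩ ≥ 0` and `⟨w, w − v⟩ ≥ 0`. -/
theorem exists_nonobtuse_zbasis (L : AddSubgroup E2) (hL : IsLattice2 L) :
    ∃ v w, IsZBasis L v w ∧ 0 ≤ ⟪v, w⟫ ∧ 0 ≤ ⟪v, v - w⟫ ∧ 0 ≤ ⟪w, w - v⟫ := by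
  obtain ⟨v₀, w₀, hB⟩ := hL
  have hv₀L : v₀ ∈ L := hB.2 ▸ AddSubgroup.subset_closure (by simp)
  have hw₀L : w₀ ∈ L := hB.2 ▸ AddSubgroup.subset_closure (by simp)
  have hv₀0 : v₀ ≠ 0 := by
    intro h
    exact hB.1.ne_zero 0 (by simp [h])
  obtain ⟨v, ⟨hvL, hv0⟩, hvmin⟩ :=
    lattice_exists_min L v₀ w₀ hB {u | u ∈ L ∧ u ≠ 0} (fun u hu => hu.1) ⟨v₀, hv₀L, hv₀0⟩
  have hS2ne : ∃ u, u ∈ L ∧ u ∉ Submodule.span ℝ {v} := by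
    by_contra hcon
    push_neg at hcon
    obtain ⟨a, ha⟩ := Submodule.mem_span_singleton.mp (hcon v₀ hv₀L)
    obtain ⟨c, hc⟩ := Submodule.mem_span_singleton.mp (hcon w₀ hw₀L)
    have hz : c • v₀ + (-a) • w₀ = 0 := by
      rw [← ha, ← hc]
      module
    obtain ⟨hc0, ha0⟩ := LinearIndependent.pair_iff.mp hB.1 c (-a) hz
    apply hv₀0
    rw [← ha, neg_eq_zero.mp ha0, zero_smul]
  obtain ⟨w, ⟨hwL, hwns⟩, hwmin⟩ :=
    lattice_exists_min L v₀ w₀ hB {u | u ∈ L ∧ u ∉ Submodule.span ℝ {v}}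
      (fun u hu => hu.1) hS2ne
  rcases le_or_gt 0 ⟪v, w⟫ with hip | hip
  · exact main_aux L v w hvL hwL hv0 hwns (fun u hu h0 => hvmin u ⟨hu, h0⟩)
      (fun u hu hns => hwmin u ⟨hu, hns⟩) hip
  · refine main_aux L v (-w) hvL (AddSubgroup.neg_mem L hwL) hv0
      (fun h => hwns ?_) (fun u hu h0 => hvmin u ⟨hu, h0⟩)
      (fun u hu hns => ?_) ?_
    · simpa using Submodule.neg_mem _ h
    · rw [norm_neg]
      exact hwmin u ⟨hu, hns⟩
    · rw [inner_neg_right]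
      linarith
end
end
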